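/- Let c be a rational number with |c| > 27/4. The generalized continued fraction with coefficients a(0) = 1, a(1) = 6c, a(n) = (4c + 27)n² + (2c - 27)n + 6 for n ≥ 2, b(0) = 6, and b(n) = -6cn(2n+1)(3n+1)(3n+2) for n ≥ 1 converges to S(c); that is, its convergents pₙ/qₙ are defined (qₙ ≠ 0 for all sufficiently large n) and pₙ/qₙ → S(c). In particular S(c) ∈ 𝒞. -/

import Mathlib

/-- Numerators of the generalized continued fraction with partial
quotients `a` and partial numerators `b`:
`p₀ = a 0`, `p₁ = a 1 * a 0 + b 0`, `pₙ = a n * pₙ₋₁ + b (n-1) * pₙ₋₂`. -/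
def cfP (a b : ℕ → ℚ) : ℕ → ℚ
  | 0 => a 0
  | 1 => a 1 * a 0 + b 0
  | n + 2 => a (n + 2) * cfP a b (n + 1) + b (n + 1) * cfP a b n

/-- Denominators of the generalized continued fraction:
`q₀ = 1`, `q₁ = a 1`, `qₙ = a n * qₙ₋₁ + b (n-1) * qₙ₋₂`. -/
def cfQ (a b : ℕ → ℚ) : ℕ → ℚ
  | 0 => 1
  | 1 => a 1
  | n + 2 => a (n + 2) * cfQ a b (n + 1) + b (n + 1) * cfQ a b n

/-- The generalized continued fraction `a(0) + b(0)/(a(1) + b(1)/(a(2) + ⋯))`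
converges to the real number `u`. -/
def CFConvergesTo (a b : ℕ → ℚ) (u : ℝ) : Prop :=
  (∀ n, b n ≠ 0) ∧ (∃ N, ∀ n ≥ N, cfQ a b n ≠ 0) ∧
  Filter.Tendsto (fun n : ℕ => ((cfP a b n : ℝ) / (cfQ a b n : ℝ)))
    Filter.atTop (nhds u)

/-- The continued fraction has coefficients given by polynomials for all
sufficiently large indices. -/
def CFPolyType (a b : ℕ → ℚ) : Prop :=
  ∃ (A B : Polynomial ℚ) (N : ℕ), ∀ n ≥ N,
    a n = A.eval (n : ℚ) ∧ b n = B.eval (n : ℚ)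

/-- A real number is of continued fraction type (belongs to `𝒞`) if some
generalized continued fraction of polynomial type converges to it. -/
def CFType (u : ℝ) : Prop :=
  ∃ a b : ℕ → ℚ, CFPolyType a b ∧ CFConvergesTo a b u

/-- Key binomial identity: `C(3m+3, m+1)·(2m+2)(2m+1)(m+1) = (3m+3)(3m+2)(3m+1)·C(3m, m)`. -/
lemma choose_id (m : ℕ) :
    ((3*m+3).choose (m+1) : ℚ) * ((2*(m:ℚ)+2)*(2*(m:ℚ)+1)*((m:ℚ)+1)) =
    ((3*(m:ℚ)+3)*(3*(m:ℚ)+2)*(3*(m:ℚ)+1)) * ((3*m).choose m : ℚ) := by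
  have h1 := Nat.choose_mul_factorial_mul_factorial (show m ≤ 3*m by omega)
  have h2 := Nat.choose_mul_factorial_mul_factorial (show m+1 ≤ 3*m+3 by omega)
  rw [show 3*m - m = 2*m by omega] at h1
  rw [show 3*m+3 - (m+1) = 2*m+2 by omega] at h2
  have hm : ((m.factorial : ℚ) * ((2*m).factorial : ℚ)) ≠ 0 := by positivity
  apply mul_right_cancel₀ hm
  have e1 : ((3*m+3).factorial : ℚ) = (3*(m:ℚ)+3)*(3*(m:ℚ)+2)*(3*(m:ℚ)+1) * ((3*m).factorial : ℚ) := by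
    rw [show 3*m+3 = (3*m+2)+1 from rfl, show 3*m+2 = (3*m+1)+1 from rfl, show 3*m+1 = (3*m)+1 from rfl]
    push_cast [Nat.factorial_succ]
    ring
  have e2 : ((m+1).factorial : ℚ) = ((m:ℚ)+1) * (m.factorial : ℚ) := by
    push_cast [Nat.factorial_succ]; ring
  have e3 : ((2*m+2).factorial : ℚ) = (2*(m:ℚ)+2)*(2*(m:ℚ)+1) * ((2*m).factorial : ℚ) := by
    rw [show 2*m+2 = (2*m+1)+1 from rfl, show 2*m+1 = (2*m)+1 from rfl]
    push_cast [Nat.factorial_succ]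
    ring
  have h1' : ((3*m).choose m : ℚ) * (m.factorial : ℚ) * ((2*m).factorial : ℚ) = ((3*m).factorial : ℚ) := by
    exact_mod_cast congrArg (Nat.cast : ℕ → ℚ) h1
  have h2' : ((3*m+3).choose (m+1) : ℚ) * ((m+1).factorial : ℚ) * ((2*m+2).factorial : ℚ) = ((3*m+3).factorial : ℚ) := by
    exact_mod_cast congrArg (Nat.cast : ℕ → ℚ) h2
  rw [e2, e3] at h2'
  rw [e1] at h2'
  linear_combination h2' - (3*(m:ℚ)+3)*(3*(m:ℚ)+2)*(3*(m:ℚ)+1) * h1'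

/-- Euler's continued fraction for the hypergeometric series `S(c)`:
the CF with `a(0)=1`, `a(1)=6c`, `a(n)=(4c+27)n²+(2c-27)n+6` for `n ≥ 2`,
`b(0)=6`, `b(n)=-6cn(2n+1)(3n+1)(3n+2)` for `n ≥ 1` converges to `S(c)`. -/
theorem euler_CF_for_hypergeometric (c : ℚ) (hc : |c| > 27 / 4) :
    let a : ℕ → ℚ := fun n =>
      if n = 0 then 1 else if n = 1 then 6 * c
      else (4 * c + 27) * (n : ℚ) ^ 2 + (2 * c - 27) * (n : ℚ) + 6
    let b : ℕ → ℚ := fun n =>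
      if n = 0 then 6
      else -6 * c * (n : ℚ) * (2 * (n : ℚ) + 1) * (3 * (n : ℚ) + 1) *
        (3 * (n : ℚ) + 2)
    CFConvergesTo a b
      (∑' n : ℕ, (1 / (2 * (n : ℝ) + 1)) * (Nat.choose (3 * n) n : ℝ) *
        ((c : ℝ))⁻¹ ^ n) ∧
    CFType (∑' n : ℕ, (1 / (2 * (n : ℝ) + 1)) * (Nat.choose (3 * n) n : ℝ) *
        ((c : ℝ))⁻¹ ^ n) := by
  intro a b
  have hc0 : c ≠ 0 := by
    intro h; rw [h] at hc; simp at hc; linarith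
  -- values of a and b
  have ha : ∀ n : ℕ, a (n+2) = (4*c+27)*((n:ℚ)+2)^2 + (2*c-27)*((n:ℚ)+2) + 6 := by
    intro n; simp only [a]
    rw [if_neg (by omega), if_neg (by omega)]
    push_cast; ring
  have hb : ∀ n : ℕ, b (n+1) = -6*c*((n:ℚ)+1)*(2*((n:ℚ)+1)+1)*(3*((n:ℚ)+1)+1)*(3*((n:ℚ)+1)+2) := by
    intro n; simp only [b]
    rw [if_neg (by omega)]
    push_cast; ring
  set t : ℕ → ℚ := fun k => (Nat.choose (3*k) k : ℚ) / (2*(k:ℚ)+1) * c⁻¹^k with ht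
  set Q : ℕ → ℚ := fun n => ((2*n+1).factorial : ℚ) * c^n with hQ
  set s : ℕ → ℚ := fun n => ∑ k ∈ Finset.range (n+1), t k with hs
  have hQne : ∀ n, Q n ≠ 0 := by
    intro n
    simp only [hQ]
    positivity
  -- Q recurrence
  have hQrec : ∀ n : ℕ, a (n+2) * Q (n+1) + b (n+1) * Q n = Q (n+2) := by
    intro n
    simp only [hQ, ha, hb]
    have e1 : ((2*(n+2)+1).factorial : ℚ)
        = (2*(n:ℚ)+5)*(2*(n:ℚ)+4) * ((2*(n+1)+1).factorial : ℚ) := by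
      rw [show 2*(n+2)+1 = (2*(n+1)+1+1)+1 by ring]
      push_cast [Nat.factorial_succ]; ring
    have e2 : ((2*(n+1)+1).factorial : ℚ)
        = (2*(n:ℚ)+3)*(2*(n:ℚ)+2) * ((2*n+1).factorial : ℚ) := by
      rw [show 2*(n+1)+1 = (2*n+1+1)+1 by ring]
      push_cast [Nat.factorial_succ]; ring
    rw [e1, e2]
    ring
  -- the crucial zero identity
  have hzero : ∀ n : ℕ, a (n+2) * Q (n+1) * t (n+2) + b (n+1) * Q n * (t (n+1) + t (n+2)) = 0 := by
    intro n
    rw [ha, hb]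
    simp only [hQ, ht]
    have hXY := choose_id (n+1)
    rw [show 3*(n+1)+3 = 3*(n+2) by ring, show (n+1)+1 = n+2 by ring] at hXY
    have hden : ((2*(n:ℚ)+4)*(2*(n:ℚ)+3)*((n:ℚ)+2)) ≠ 0 := by positivity
    have hY : (Nat.choose (3*(n+2)) (n+2) : ℚ)
        = ((3*((n:ℚ)+1)+3)*(3*((n:ℚ)+1)+2)*(3*((n:ℚ)+1)+1)) * ((3*(n+1)).choose (n+1) : ℚ)
          / ((2*(n:ℚ)+4)*(2*(n:ℚ)+3)*((n:ℚ)+2)) := by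
      rw [eq_div_iff hden]
      push_cast at hXY ⊢
      linear_combination hXY
    rw [hY]
    have e2 : ((2*(n+1)+1).factorial : ℚ) = (2*(n:ℚ)+3)*(2*(n:ℚ)+2) * ((2*n+1).factorial : ℚ) := by
      rw [show 2*(n+1)+1 = (2*n+1+1)+1 by ring]
      push_cast [Nat.factorial_succ]; ring
    rw [e2]
    have hcn : c⁻¹^n * c^n = 1 := by
      rw [inv_pow, inv_mul_cancel₀ (pow_ne_zero _ hc0)]
    have hcp : c⁻¹^(n+1) * c^(n+1) = 1 := by
      rw [inv_pow, inv_mul_cancel₀ (pow_ne_zero _ hc0)]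
    have hc2 : c⁻¹^(n+2) * c^(n+1) = c⁻¹ := by
      rw [pow_succ c⁻¹ (n+1), mul_comm (c⁻¹^(n+1)) c⁻¹, mul_assoc, hcp, mul_one]
    have h1 : c⁻¹^(n+1) * c^n = c⁻¹ := by
      rw [pow_succ, mul_comm (c⁻¹^n) c⁻¹, mul_assoc, hcn, mul_one]
    have hc3 : c⁻¹^(n+2) * c^n = c⁻¹ * c⁻¹ := by
      rw [pow_succ, mul_comm (c⁻¹^(n+1)) c⁻¹, mul_assoc, h1]
    simp only [inv_pow]
    field_simp
    push_cast
    ring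
  -- closed forms for the convergents
  have hPQ : ∀ n, cfQ a b n = Q n ∧ cfP a b n = Q n * s n := by
    intro n
    induction n using Nat.twoStepInduction with
    | zero =>
      constructor
      · simp [cfQ, hQ]
      · simp [cfP, hs, ht, hQ, a]
    | one =>
      constructor
      · simp only [cfQ, hQ]
        simp [a, Nat.factorial]
      · simp only [cfP, hs, hQ]
        rw [Finset.sum_range_succ, Finset.sum_range_one]
        simp only [ht, a, b]
        norm_num [Nat.factorial]
        field_simp
    | more n ih1 ih2 =>
      obtain ⟨hq0, hp0⟩ := ih1
      obtain ⟨hq1, hp1⟩ := ih2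
      constructor
      · rw [cfQ, hq0, hq1, hQrec]
      · rw [cfP, hp0, hp1]
        have hs2 : s (n+2) = s n + t (n+1) + t (n+2) := by
          simp only [hs]
          rw [Finset.sum_range_succ, Finset.sum_range_succ]
        have hs1 : s (n+1) = s n + t (n+1) := by
          simp only [hs]
          rw [Finset.sum_range_succ]
        rw [hs1, hs2]
        linear_combination (s n + t (n+1) + t (n+2)) * hQrec n - hzero n
  -- convergents are partial sums
  have hconv : ∀ n, (cfP a b n : ℝ) / (cfQ a b n : ℝ)
      = ∑ k ∈ Finset.range (n+1), (1 / (2 * (k : ℝ) + 1)) * (Nat.choose (3 * k) k : ℝ) * ((c : ℝ))⁻¹ ^ k := by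
    intro n
    rw [(hPQ n).1, (hPQ n).2]
    have : (Q n : ℝ) ≠ 0 := by exact_mod_cast Rat.cast_ne_zero.mpr (hQne n)
    rw [mul_comm, Rat.cast_mul, mul_div_assoc, div_self this, mul_one]
    simp only [hs, ht]
    push_cast
    refine Finset.sum_congr rfl fun k _ => by ring
  -- summability of the series
  set f : ℕ → ℝ := fun n => (1 / (2 * (n : ℝ) + 1)) * (Nat.choose (3 * n) n : ℝ) * ((c : ℝ))⁻¹ ^ n with hf
  have hcR : (27:ℝ)/4 < |(c:ℝ)| := by
    have h := (Rat.cast_lt (K := ℝ)).2 hc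
    rwa [Rat.cast_abs, show ((27/4:ℚ):ℝ) = 27/4 by norm_num] at h
  have hcpos : (0:ℝ) < |(c:ℝ)| := by linarith
  have hsum : Summable f := by
    set r : ℝ := 27 / (4 * |(c:ℝ)|) with hr
    have hr1 : r < 1 := by
      rw [hr, div_lt_one (by linarith)]
      linarith
    apply summable_of_ratio_norm_eventually_le hr1
    filter_upwards with n
    have habs : ∀ m : ℕ, ‖f m‖ = (Nat.choose (3*m) m : ℝ) / (2*(m:ℝ)+1) * |(c:ℝ)|⁻¹ ^ m := by
      intro m
      rw [hf]
      simp only [norm_mul, norm_pow, norm_inv, Real.norm_eq_abs]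
      rw [abs_of_nonneg (by positivity : (0:ℝ) ≤ 1/(2*(m:ℝ)+1)),
        abs_of_nonneg (by positivity : (0:ℝ) ≤ (Nat.choose (3*m) m : ℝ))]
      ring
    have hXY : ((3*n+3).choose (n+1) : ℝ) * ((2*(n:ℝ)+2)*(2*(n:ℝ)+1)*((n:ℝ)+1)) =
        ((3*(n:ℝ)+3)*(3*(n:ℝ)+2)*(3*(n:ℝ)+1)) * ((3*n).choose n : ℝ) := by
      exact_mod_cast congrArg (Rat.cast : ℚ → ℝ) (choose_id n)
    have hX0 : (0:ℝ) ≤ ((3*n).choose n : ℝ) := by positivity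
    have key : ((3*n+3).choose (n+1) : ℝ) / (2*(n:ℝ)+3) ≤ 27/4 * (((3*n).choose n : ℝ) / (2*(n:ℝ)+1)) := by
      rw [div_mul_div_comm, div_le_div_iff₀ (by positivity) (by positivity)]
      apply le_of_mul_le_mul_right _ (show (0:ℝ) < (2*(n:ℝ)+2)*((n:ℝ)+1) by positivity)
      nlinarith [hXY, mul_nonneg (mul_nonneg hX0 (by positivity : (0:ℝ) ≤ (n:ℝ)+1))
        (by positivity : (0:ℝ) ≤ 162*(n:ℝ)+138)]
    have e1 : ‖f (n+1)‖ = (((3*n+3).choose (n+1) : ℝ) / (2*(n:ℝ)+3)) * (|(c:ℝ)|⁻¹^n * |(c:ℝ)|⁻¹) := by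
      rw [habs, show 3*(n+1) = 3*n+3 by ring, pow_succ]
      push_cast
      ring
    have e2 : r * ‖f n‖ = (27/4 * (((3*n).choose n : ℝ) / (2*(n:ℝ)+1))) * (|(c:ℝ)|⁻¹^n * |(c:ℝ)|⁻¹) := by
      rw [habs, hr]
      ring
    rw [e1, e2]
    exact mul_le_mul_of_nonneg_right key (by positivity)
  -- convergence of convergents to the sum
  have htend : Filter.Tendsto (fun n : ℕ => ((cfP a b n : ℝ) / (cfQ a b n : ℝ)))
      Filter.atTop (nhds (∑' n : ℕ, f n)) := by
    have h1 := hsum.hasSum.tendsto_sum_nat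
    have h2 : Filter.Tendsto (fun n : ℕ => ∑ i ∈ Finset.range (n+1), f i)
        Filter.atTop (nhds (∑' n : ℕ, f n)) :=
      h1.comp (Filter.tendsto_add_atTop_nat 1)
    exact h2.congr fun n => (hconv n).symm
  -- non-vanishing of b
  have hbne : ∀ n, b n ≠ 0 := by
    intro n
    cases n with
    | zero => simp [b]
    | succ m =>
      rw [hb m]
      have h6 : (-6*c : ℚ) ≠ 0 := by
        simp [hc0]
      exact mul_ne_zero (mul_ne_zero (mul_ne_zero (mul_ne_zero h6
        (by positivity)) (by positivity)) (by positivity)) (by positivity)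
  have hCF : CFConvergesTo a b
      (∑' n : ℕ, (1 / (2 * (n : ℝ) + 1)) * (Nat.choose (3 * n) n : ℝ) * ((c : ℝ))⁻¹ ^ n) := by
    refine ⟨hbne, ⟨0, fun n _ => ?_⟩, htend⟩
    rw [(hPQ n).1]
    exact hQne n
  refine ⟨hCF, a, b, ?_, hCF⟩
  -- polynomial type
  refine ⟨Polynomial.C (4*c+27) * Polynomial.X^2 + Polynomial.C (2*c-27) * Polynomial.X + Polynomial.C 6,
    Polynomial.C (-6*c) * Polynomial.X * (2*Polynomial.X + 1) * (3*Polynomial.X + 1) * (3*Polynomial.X + 2),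
    2, fun n hn => ?_⟩
  obtain ⟨m, rfl⟩ := Nat.exists_eq_add_of_le hn
  constructor
  · rw [show 2+m = m+2 by ring, ha m]
    simp only [Polynomial.eval_add, Polynomial.eval_mul, Polynomial.eval_pow,
      Polynomial.eval_C, Polynomial.eval_X]
    push_cast
    ring
  · rw [show 2+m = (m+1)+1 by ring, hb (m+1)]
    simp only [Polynomial.eval_add, Polynomial.eval_mul, Polynomial.eval_pow,
      Polynomial.eval_C, Polynomial.eval_X, Polynomial.eval_ofNat, Polynomial.eval_one]
    push_cast
    ring
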